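/- For any α, ω : Finset Q, the subgroup of (Finset Q, Δ) generated by G_α ∪ G_{α Δ ω} equals the subgroup generated by G_α ∪ G_ω; call it G. Moreover, for any e_α ∈ E_α, e_ω ∈ E_ω and e_{α Δ ω} ∈ E_{α Δ ω}, one has e_α Δ e_{α Δ ω} Δ e_ω Δ (α ∩ ω) ∈ G; i.e., in coset notation, e_α e_{α+ω} G_α G_{α+ω} = e_ω Z_{α∩ω} G_α G_ω. (Lemma A6.) -/

import Mathlib

open Finset
open scoped symmDiff Matrix

namespace CC

variable {Q : Type*} [Fintype Q] [DecidableEq Q]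

/-- A subgroup of the abelian group `(Finset Q, ∆)`. -/
def IsSubgroup (S : Set (Finset Q)) : Prop :=
  ∅ ∈ S ∧ ∀ a ∈ S, ∀ b ∈ S, a ∆ b ∈ S

/-- The subgroup of `(Finset Q, ∆)` generated by a set. -/
def closure (T : Set (Finset Q)) : Set (Finset Q) :=
  ⋂₀ {S : Set (Finset Q) | IsSubgroup S ∧ T ⊆ S}

/-- A CSS stabilizer code on the qubits `Q`. -/
structure CSS (Q : Type*) [Fintype Q] [DecidableEq Q] where
  SX : Set (Finset Q)
  SZ : Set (Finset Q)
  hSX : IsSubgroup SX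
  hSZ : IsSubgroup SZ
  comm : ∀ a ∈ SZ, ∀ b ∈ SX, 2 ∣ (a ∩ b).card

def ZX (C : CSS Q) : Set (Finset Q) := {γ | ∀ f ∈ C.SZ, 2 ∣ (γ ∩ f).card}

def ZZ (C : CSS Q) : Set (Finset Q) := {z | ∀ c ∈ C.SX, 2 ∣ (z ∩ c).card}

/-- Duality assumption. -/
def Dual (C : CSS Q) : Prop :=
  C.SZ = {z | ∀ γ ∈ ZX C, 2 ∣ (z ∩ γ).card} ∧
  C.SX = {c | ∀ z ∈ ZZ C, 2 ∣ (c ∩ z).card}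

def LogicalX (C : CSS Q) (l : Finset Q) : Prop := l ∈ ZX C ∧ l ∉ C.SX

def LogicalZ (C : CSS Q) (l : Finset Q) : Prop := l ∈ ZZ C ∧ l ∉ C.SZ

/-- Single-logical-qubit assumption. -/
def SingleQubit (C : CSS Q) : Prop :=
  (ZX C ≠ C.SX ∧ ∀ l l', LogicalX C l → LogicalX C l' → l ∆ l' ∈ C.SX) ∧
  (ZZ C ≠ C.SZ ∧ ∀ l l', LogicalZ C l → LogicalZ C l' → l ∆ l' ∈ C.SZ)

/-- Intersection axiom. -/
def Inter (C : CSS Q) : Prop :=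
  ZZ C = {x | ∃ α ∈ ZX C, ∃ β ∈ ZX C, x = α ∩ β}

def G (C : CSS Q) (α : Finset Q) : Set (Finset Q) :=
  closure (C.SZ ∪ {x | ∃ β ∈ ZX C, x = α ∩ β})

def H (C : CSS Q) (α : Finset Q) : Set (Finset Q) :=
  closure (C.SZ ∪ {x | ∃ β ∈ C.SX, x = α ∩ β})

def Zof (K : Set (Finset Q)) : Set (Finset Q) := {γ | ∀ h ∈ K, 2 ∣ (γ ∩ h).card}

def Tolerable (C : CSS Q) (α : Finset Q) : Prop := ∀ z ∈ G C α, ¬ LogicalZ C z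

def g (b : Q → ℤ) (s : Finset Q) : ℤ := ∑ q ∈ s, b q

/-- T-invariance assumption. -/
def TInv (C : CSS Q) (b : Q → ℤ) : Prop :=
  (∀ β ∈ C.SX, (8 : ℤ) ∣ g b β) ∧
  (∀ β ∈ C.SX, ∀ γ ∈ ZX C, (8 : ℤ) ∣ (g b β - 2 * g b (γ ∩ β)))

def E (C : CSS Q) (b : Q → ℤ) (α : Finset Q) : Set (Finset Q) :=
  {z | ∀ γ ∈ Zof (G C α), g b (γ ∩ α) ≡ 2 * ((z ∩ γ).card : ℤ) [ZMOD 4]}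

/- Quantum setting -/

abbrev M (Q : Type*) [Fintype Q] [DecidableEq Q] :=
  Matrix (Q → ZMod 2) (Q → ZMod 2) ℂ

def supp (v : Q → ZMod 2) : Finset Q := Finset.univ.filter (fun q => v q = 1)

def ind (α : Finset Q) : Q → ZMod 2 := fun q => if q ∈ α then 1 else 0

def XM (α : Finset Q) : M Q :=
  Matrix.of fun u v => if u = v + ind α then (1 : ℂ) else 0

noncomputable def ZM (α : Finset Q) : M Q :=
  Matrix.diagonal fun v => (-1 : ℂ) ^ (supp v ∩ α).card

noncomputable def AM (b : Q → ℤ) (α : Finset Q) : M Q :=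
  Matrix.diagonal fun v => Complex.I ^ (g b (α ∩ supp v))

noncomputable def UM (b : Q → ℤ) : M Q :=
  Matrix.diagonal fun v => Complex.exp (Real.pi * Complex.I / 4) ^ (g b (supp v))

def Encoded (C : CSS Q) (ρ : M Q) : Prop :=
  ρ.trace = 1 ∧
  (∀ c ∈ C.SX, XM c * ρ = ρ ∧ ρ * XM c = ρ) ∧
  (∀ f ∈ C.SZ, ZM f * ρ = ρ ∧ ρ * ZM f = ρ)

instance : Std.Commutative (α := Finset Q) (· ∆ ·) := ⟨symmDiff_comm⟩
instance : Std.Associative (α := Finset Q) (· ∆ ·) := ⟨symmDiff_assoc⟩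

/-- Iterated symmetric difference over a finite index set. -/
def bigΔ {ι : Type*} (s : Finset ι) (f : ι → Finset Q) : Finset Q :=
  s.fold (· ∆ ·) ∅ f

/-! ### Auxiliary lemmas -/

lemma closure_isSubgroup (T : Set (Finset Q)) : IsSubgroup (closure T) := by
  constructor
  · intro S hS; exact hS.1.1
  · intro a ha b hb S hS; exact hS.1.2 a (ha S hS) b (hb S hS)

lemma subset_closure' (T : Set (Finset Q)) : T ⊆ closure T :=
  fun _x hx S hS => hS.2 hx

lemma closure_min {T S : Set (Finset Q)} (h1 : IsSubgroup S) (h2 : T ⊆ S) :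
    closure T ⊆ S := fun _x hx => hx S ⟨h1, h2⟩

lemma zmod2_cases (c : ZMod 2) : c = 0 ∨ c = 1 := by fin_cases c; exacts [Or.inl rfl, Or.inr rfl]

lemma ind_empty : ind (∅ : Finset Q) = 0 := by
  funext q; simp [ind]

lemma ind_symmDiff (a c : Finset Q) : ind (a ∆ c) = ind a + ind c := by
  funext q
  simp only [ind, Pi.add_apply, Finset.mem_symmDiff]
  by_cases ha : q ∈ a <;> by_cases hc : q ∈ c <;> simp [ha, hc] <;> decide

lemma ind_injective : Function.Injective (ind (Q := Q)) := by
  intro a c h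
  ext q
  have := congrFun h q
  simp only [ind] at this
  by_cases ha : q ∈ a <;> by_cases hc : q ∈ c <;> simp_all

lemma ind_supp (v : Q → ZMod 2) : ind (supp v) = v := by
  funext q
  rcases zmod2_cases (v q) with h | h <;> simp [ind, supp, h]

/-- The mod-2 dot product bilinear form. -/
def Bf : LinearMap.BilinForm (ZMod 2) (Q → ZMod 2) :=
  LinearMap.mk₂ (ZMod 2) (fun u v => ∑ q, u q * v q)
    (fun m n p => by simp [add_mul, Finset.sum_add_distrib])
    (fun c m n => by simp [Finset.mul_sum, mul_assoc])
    (fun m n p => by simp [mul_add, Finset.sum_add_distrib])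
    (fun c m n => by simp [Finset.mul_sum, mul_left_comm])

lemma Bf_apply (u v : Q → ZMod 2) : Bf u v = ∑ q, u q * v q := rfl

lemma Bf_comm (u v : Q → ZMod 2) : Bf u v = Bf v u := by
  simp [Bf_apply, mul_comm]

lemma Bf_refl : (Bf (Q := Q)).IsRefl := by
  intro u v h; rwa [Bf_comm]

lemma Bf_nondeg : (Bf (Q := Q)).Nondegenerate := by
  refine (LinearMap.IsRefl.nondegenerate_iff_separatingLeft Bf_refl).2 ?_
  intro v h
  funext q
  have := h (Pi.single q 1)
  rw [Bf_apply] at this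
  simp only [Pi.single_apply, mul_ite, mul_one, mul_zero] at this
  rw [Finset.sum_ite_eq' Finset.univ q (fun p => v p)] at this
  simpa using this

lemma Bf_ind (a c : Finset Q) : Bf (ind a) (ind c) = (((a ∩ c).card : ℕ) : ZMod 2) := by
  rw [Bf_apply]
  have : ∀ q, ind a q * ind c q = if q ∈ a ∩ c then (1 : ZMod 2) else 0 := by
    intro q
    by_cases ha : q ∈ a <;> by_cases hc : q ∈ c <;> simp [ind, ha, hc]
  simp only [this]
  rw [Finset.sum_ite_mem, Finset.univ_inter, Finset.sum_const, nsmul_eq_mul, mul_one]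

/-- The image of `closure T` under `ind` as a submodule. -/
def closureSub (T : Set (Finset Q)) : Submodule (ZMod 2) (Q → ZMod 2) where
  carrier := ind '' closure T
  zero_mem' := ⟨∅, (closure_isSubgroup T).1, ind_empty⟩
  add_mem' := by
    rintro a c ⟨x, hx, rfl⟩ ⟨y, hy, rfl⟩
    exact ⟨x ∆ y, (closure_isSubgroup T).2 x hx y hy, (ind_symmDiff x y)⟩
  smul_mem' := by
    intro c x hx
    rcases zmod2_cases c with rfl | rfl
    · rw [zero_smul]; exact ⟨∅, (closure_isSubgroup T).1, ind_empty⟩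
    · rwa [one_smul]

lemma mem_closure_iff_span (T : Set (Finset Q)) (z : Finset Q) :
    z ∈ closure T ↔ ind z ∈ Submodule.span (ZMod 2) (ind '' T) := by
  constructor
  · intro hz
    refine hz {x | ind x ∈ Submodule.span (ZMod 2) (ind '' T)} ⟨⟨?_, ?_⟩, ?_⟩
    · simp only [Set.mem_setOf_eq, ind_empty]; exact zero_mem _
    · intro a ha c hc
      simp only [Set.mem_setOf_eq, ind_symmDiff]; exact add_mem ha hc
    · intro t ht
      exact Submodule.subset_span ⟨t, ht, rfl⟩
  · intro hz
    have hle : Submodule.span (ZMod 2) (ind '' T) ≤ closureSub T :=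
      Submodule.span_le.2 (Set.image_mono (subset_closure' T))
    obtain ⟨y, hy, hyz⟩ := hle hz
    rwa [← ind_injective hyz]

lemma mem_closure_of_dual (T : Set (Finset Q)) (z : Finset Q)
    (h : ∀ γ : Finset Q, (∀ x ∈ closure T, 2 ∣ (γ ∩ x).card) → 2 ∣ (z ∩ γ).card) :
    z ∈ closure T := by
  rw [mem_closure_iff_span]
  set W := Submodule.span (ZMod 2) (ind '' T) with hW
  rw [← LinearMap.BilinForm.orthogonal_orthogonal Bf_nondeg Bf_refl W]
  intro n hn
  have hzn : ∀ x ∈ closure T, 2 ∣ (supp n ∩ x).card := by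
    intro x hx
    have hx' : Bf (ind x) n = 0 := hn (ind x) ((mem_closure_iff_span T x).1 hx)
    rw [← ind_supp n, Bf_ind] at hx'
    rw [Finset.inter_comm]
    exact (ZMod.natCast_eq_zero_iff _ 2).1 hx'
  have hd := h (supp n) hzn
  show Bf n (ind z) = 0
  rw [← ind_supp n, Bf_ind]
  rw [ZMod.natCast_eq_zero_iff]
  rwa [Finset.inter_comm]

lemma g_parity (b : Q → ℤ) (hb : ∀ q, Odd (b q)) (s : Finset Q) :
    g b s ≡ (s.card : ℤ) [ZMOD 2] := by
  have h : g b s - (s.card : ℤ) = ∑ q ∈ s, (b q - 1) := by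
    rw [Finset.sum_sub_distrib]
    simp [g]
  have hdvd : (2 : ℤ) ∣ g b s - (s.card : ℤ) := by
    rw [h]
    refine Finset.dvd_sum fun q _ => ?_
    obtain ⟨k, hk⟩ := hb q
    omega
  exact (Int.modEq_iff_dvd.mpr hdvd).symm

lemma g_symmDiff (b : Q → ℤ) (s t : Finset Q) :
    g b (s ∆ t) = g b s + g b t - 2 * g b (s ∩ t) := by
  have h1 := Finset.sum_union (f := b) (Finset.disjoint_sdiff_inter s t)
  rw [Finset.sdiff_union_inter] at h1
  have h2 := Finset.sum_union (f := b) (Finset.disjoint_sdiff_inter t s)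
  rw [Finset.sdiff_union_inter, Finset.inter_comm t s] at h2
  have h3 : g b (s ∆ t) = ∑ q ∈ s \ t, b q + ∑ q ∈ t \ s, b q := by
    rw [show s ∆ t = (s \ t) ∪ (t \ s) from rfl]
    exact Finset.sum_union disjoint_sdiff_sdiff
  simp only [g] at *
  rw [h3, h1, h2]; ring

lemma card_symmDiff_int (s t : Finset Q) :
    (((s ∆ t).card : ℕ) : ℤ) = (s.card : ℤ) + t.card - 2 * (s ∩ t).card := by
  have := g_symmDiff (fun _ => (1 : ℤ)) s t
  simpa [g, mul_comm] using this

lemma G_symmDiff_subset (C : CSS Q) (u v : Finset Q) :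
    G C (u ∆ v) ⊆ closure (G C u ∪ G C v) := by
  apply closure_min (closure_isSubgroup _)
  rintro x (hx | ⟨β, hβ, rfl⟩)
  · exact subset_closure' _ (Or.inl (subset_closure' _ (Or.inl hx)))
  · have hu : u ∩ β ∈ closure (G C u ∪ G C v) :=
      subset_closure' _ (Or.inl (subset_closure' _ (Or.inr ⟨β, hβ, rfl⟩)))
    have hv : v ∩ β ∈ closure (G C u ∪ G C v) :=
      subset_closure' _ (Or.inr (subset_closure' _ (Or.inr ⟨β, hβ, rfl⟩)))
    have hd : (u ∆ v) ∩ β = (u ∩ β) ∆ (v ∩ β) := by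
      ext q; simp only [Finset.mem_symmDiff, Finset.mem_inter]; tauto
    rw [hd]
    exact (closure_isSubgroup _).2 _ hu _ hv

/-- Lemma A6: in coset notation, `e_α e_{α+ω} G_α G_{α+ω} = e_ω Z_{α∩ω} G_α G_ω`. -/
theorem coset_identity
    (C : CSS Q) (b : Q → ℤ) (hb : ∀ q, Odd (b q))
    (hdual : Dual C) (hinter : Inter C) (htinv : TInv C b)
    (α ω : Finset Q) (eα eω eαω : Finset Q)
    (h1 : eα ∈ E C b α) (h2 : eω ∈ E C b ω) (h3 : eαω ∈ E C b (α ∆ ω)) :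
    closure (G C α ∪ G C (α ∆ ω)) = closure (G C α ∪ G C ω) ∧
    eα ∆ eαω ∆ eω ∆ (α ∩ ω) ∈ closure (G C α ∪ G C (α ∆ ω)) := by
  have heq : closure (G C α ∪ G C (α ∆ ω)) = closure (G C α ∪ G C ω) := by
    apply Set.Subset.antisymm
    · apply closure_min (closure_isSubgroup _)
      rintro x (hx | hx)
      · exact subset_closure' _ (Or.inl hx)
      · exact G_symmDiff_subset C α ω hx
    · apply closure_min (closure_isSubgroup _)
      rintro x (hx | hx)
      · exact subset_closure' _ (Or.inl hx)
      · have : G C ω ⊆ closure (G C α ∪ G C (α ∆ ω)) := by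
          have h := G_symmDiff_subset C α (α ∆ ω)
          rwa [symmDiff_symmDiff_cancel_left] at h
        exact this hx
  refine ⟨heq, ?_⟩
  apply mem_closure_of_dual
  intro γ hγ
  have hγα : γ ∈ Zof (G C α) := fun h hh => hγ h (subset_closure' _ (Or.inl hh))
  have hγαω : γ ∈ Zof (G C (α ∆ ω)) := fun h hh => hγ h (subset_closure' _ (Or.inr hh))
  have hγω : γ ∈ Zof (G C ω) := by
    intro h hh
    apply hγ h
    rw [heq]
    exact subset_closure' _ (Or.inr hh)
  have ha := h1 γ hγα
  have hw := h2 γ hγω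
  have haw := h3 γ hγαω
  have hg : g b (γ ∩ (α ∆ ω)) = g b (γ ∩ α) + g b (γ ∩ ω) - 2 * g b (γ ∩ (α ∩ ω)) := by
    have hd : γ ∩ (α ∆ ω) = (γ ∩ α) ∆ (γ ∩ ω) := by
      ext q; simp only [Finset.mem_symmDiff, Finset.mem_inter]; tauto
    have hi : (γ ∩ α) ∩ (γ ∩ ω) = γ ∩ (α ∩ ω) := by
      ext q; simp only [Finset.mem_inter]; tauto
    rw [hd, g_symmDiff, hi]
  have hp := g_parity b hb (γ ∩ (α ∩ ω))
  -- expand the symmetric difference intersected with γ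
  have hxγ : (eα ∆ eαω ∆ eω ∆ (α ∩ ω)) ∩ γ =
      ((eα ∩ γ) ∆ (eαω ∩ γ) ∆ (eω ∩ γ)) ∆ ((α ∩ ω) ∩ γ) := by
    simp only [← Finset.inf_eq_inter, inf_symmDiff_distrib_right]
  have c3 : ((((eα ∩ γ) ∆ (eαω ∩ γ) ∆ (eω ∩ γ)) ∆ ((α ∩ ω) ∩ γ)).card : ℤ) =
      (((eα ∩ γ) ∆ (eαω ∩ γ) ∆ (eω ∩ γ)).card : ℤ) + (((α ∩ ω) ∩ γ).card : ℤ)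
        - 2 * ((((eα ∩ γ) ∆ (eαω ∩ γ) ∆ (eω ∩ γ)) ∩ ((α ∩ ω) ∩ γ)).card : ℤ) :=
    card_symmDiff_int _ _
  have c2 : (((eα ∩ γ) ∆ (eαω ∩ γ) ∆ (eω ∩ γ)).card : ℤ) =
      (((eα ∩ γ) ∆ (eαω ∩ γ)).card : ℤ) + ((eω ∩ γ).card : ℤ)
        - 2 * ((((eα ∩ γ) ∆ (eαω ∩ γ)) ∩ (eω ∩ γ)).card : ℤ) :=
    card_symmDiff_int _ _
  have c1 : (((eα ∩ γ) ∆ (eαω ∩ γ)).card : ℤ) =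
      ((eα ∩ γ).card : ℤ) + ((eαω ∩ γ).card : ℤ)
        - 2 * (((eα ∩ γ) ∩ (eαω ∩ γ)).card : ℤ) :=
    card_symmDiff_int _ _
  have c4 : (((α ∩ ω) ∩ γ).card : ℤ) = ((γ ∩ (α ∩ ω)).card : ℤ) := by
    rw [Finset.inter_comm]
  suffices h : (2 : ℤ) ∣ (((eα ∆ eαω ∆ eω ∆ (α ∩ ω)) ∩ γ).card : ℤ) by
    exact_mod_cast h
  rw [hg] at haw
  rw [hxγ]
  simp only [Int.ModEq] at ha hw haw hp
  omega

end CC
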